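/- Let p be a prime and f : ℕ → ℤ_p a Kummer function, i.e. v_p( Σ_{ν=0}^n (n choose ν)·(−1)^{n−ν}·f(ν) ) ≥ n for every integer n ≥ 0. Then there exists a unique continuous function g : ℤ_p → ℤ_p with g(n) = f(n) for all n ∈ ℕ, and this extension g belongs to KS_{p,2}, i.e. Δ^n g(s) ∈ p^n ℤ_p for all n ≥ 0 and all s ∈ ℤ_p. -/

import Mathlib

open Finset

/-- The forward difference operator `Δ_h^n` with increment `h ≥ 1`:
`Δ_h^n f(s) = ∑_{ν=0}^n (n choose ν)·(−1)^(n−ν)·f(s+νh)`. -/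
noncomputable def deltaH (p : ℕ) [Fact p.Prime] (h : ℕ) (f : ℤ_[p] → ℤ_[p]) (n : ℕ)
    (s : ℤ_[p]) : ℤ_[p] :=
  ∑ ν ∈ Finset.range (n + 1),
    (n.choose ν : ℤ_[p]) * (-1) ^ (n - ν) * f (s + (ν : ℤ_[p]) * (h : ℤ_[p]))

/-- `f ∈ KS_{p,2}`: `f` is continuous and satisfies the Kummer type congruences
`Δ^n f(s) ∈ p^n ℤ_p` for all integers `n ≥ 0` and all `s ∈ ℤ_p`. -/
def KS2 (p : ℕ) [Fact p.Prime] (f : ℤ_[p] → ℤ_[p]) : Prop :=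
  Continuous f ∧ ∀ (n : ℕ) (s : ℤ_[p]), (p : ℤ_[p]) ^ n ∣ deltaH p 1 f n s

open fwdDiff Filter Topology

instance padicInt_normSMulClass_rat (p : ℕ) [Fact p.Prime] : NormSMulClass ℤ_[p] ℚ_[p] :=
  ⟨fun r x => by rw [Algebra.smul_def, norm_mul]; rfl⟩

private lemma deltaH_eq_fwdDiff (p : ℕ) [Fact p.Prime] (g : ℤ_[p] → ℤ_[p]) (n : ℕ) (s : ℤ_[p]) :
    deltaH p 1 g n s = (fwdDiff (1:ℤ_[p]))^[n] g s := by
  rw [fwdDiff_iter_eq_sum_shift, deltaH]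
  refine Finset.sum_congr rfl fun k hk => ?_
  simp only [zsmul_eq_mul, nsmul_eq_mul, mul_one, Nat.cast_one]
  push_cast
  ring

private lemma dvd_fwdDiff_nat (p : ℕ) [Fact p.Prime] (f : ℕ → ℤ_[p])
    (hf : ∀ n : ℕ, (p : ℤ_[p]) ^ n ∣
      ∑ ν ∈ Finset.range (n + 1), (n.choose ν : ℤ_[p]) * (-1) ^ (n - ν) * f ν)
    (g : ℤ_[p] → ℤ_[p]) (hg : ∀ n : ℕ, g (n : ℤ_[p]) = f n) :
    ∀ (m n : ℕ), (p : ℤ_[p]) ^ n ∣ (fwdDiff (1:ℤ_[p]))^[n] g ((m : ℕ) : ℤ_[p]) := by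
  intro m
  induction m with
  | zero =>
    intro n
    rw [← deltaH_eq_fwdDiff]
    have : deltaH p 1 g n ((0:ℕ) : ℤ_[p])
        = ∑ ν ∈ Finset.range (n + 1), (n.choose ν : ℤ_[p]) * (-1) ^ (n - ν) * f ν := by
      unfold deltaH
      refine Finset.sum_congr rfl fun ν _ => ?_
      rw [Nat.cast_one, mul_one, Nat.cast_zero, zero_add, hg]
    rw [this]; exact hf n
  | succ m ih =>
    intro n
    have h1 : (fwdDiff (1:ℤ_[p]))^[n] g (((m+1 : ℕ)) : ℤ_[p])
        = (fwdDiff (1:ℤ_[p]))^[n+1] g ((m : ℕ) : ℤ_[p])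
          + (fwdDiff (1:ℤ_[p]))^[n] g ((m : ℕ) : ℤ_[p]) := by
      rw [Function.iterate_succ_apply', fwdDiff]
      push_cast
      ring
    rw [h1]
    exact dvd_add ((pow_dvd_pow _ (Nat.le_succ n)).trans (ih (n+1))) (ih n)

theorem stmt18 (p : ℕ) [Fact p.Prime] (f : ℕ → ℤ_[p])
    (hf : ∀ n : ℕ, (p : ℤ_[p]) ^ n ∣
      ∑ ν ∈ Finset.range (n + 1), (n.choose ν : ℤ_[p]) * (-1) ^ (n - ν) * f ν) :
    (∃! g : ℤ_[p] → ℤ_[p], Continuous g ∧ ∀ n : ℕ, g (n : ℤ_[p]) = f n) ∧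
      ∀ g : ℤ_[p] → ℤ_[p], (Continuous g ∧ ∀ n : ℕ, g (n : ℤ_[p]) = f n) → KS2 p g := by
  -- Part 2
  have part2 : ∀ g : ℤ_[p] → ℤ_[p],
      (Continuous g ∧ ∀ n : ℕ, g (n : ℤ_[p]) = f n) → KS2 p g := by
    rintro g ⟨hc, hg⟩
    refine ⟨hc, fun n s => ?_⟩
    rw [deltaH_eq_fwdDiff]
    have hcont : Continuous fun s : ℤ_[p] => (fwdDiff (1:ℤ_[p]))^[n] g s := by
      have heq : (fun s : ℤ_[p] => (fwdDiff (1:ℤ_[p]))^[n] g s)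
          = fun s => ∑ k ∈ Finset.range (n+1),
              ((-1:ℤ)^(n-k) * n.choose k) • g (s + k • (1:ℤ_[p])) := by
        funext s; rw [fwdDiff_iter_eq_sum_shift]
      rw [heq]
      exact continuous_finset_sum _ fun k _ =>
        by simp only [zsmul_eq_mul]; exact continuous_const.mul (hc.comp (continuous_id.add continuous_const))
    have hclosed : IsClosed {s : ℤ_[p] | (p:ℤ_[p])^n ∣ (fwdDiff (1:ℤ_[p]))^[n] g s} := by
      have heq : {s : ℤ_[p] | (p:ℤ_[p])^n ∣ (fwdDiff (1:ℤ_[p]))^[n] g s}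
          = (fun s => (fwdDiff (1:ℤ_[p]))^[n] g s) ⁻¹' {x : ℤ_[p] | ‖x‖ ≤ (p:ℝ)^(-n:ℤ)} := by
        ext t
        simp only [Set.mem_setOf_eq, Set.mem_preimage,
          PadicInt.norm_le_pow_iff_mem_span_pow, Ideal.mem_span_singleton]
      rw [heq]
      exact (isClosed_le continuous_norm continuous_const).preimage hcont
    have hmem : ∀ m : ℕ, ((m:ℕ) : ℤ_[p]) ∈
        {s : ℤ_[p] | (p:ℤ_[p])^n ∣ (fwdDiff (1:ℤ_[p]))^[n] g s} :=
      fun m => dvd_fwdDiff_nat p f hf g hg m n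
    have hs : s ∈ closure {s : ℤ_[p] | (p:ℤ_[p])^n ∣ (fwdDiff (1:ℤ_[p]))^[n] g s} := by
      refine closure_mono ?_ (PadicInt.denseRange_natCast s)
      rintro _ ⟨m, rfl⟩
      exact hmem m
    exact hclosed.closure_subset hs
  refine ⟨?_, part2⟩
  -- existence via Mahler series
  have hb : ∀ n : ℕ, (p:ℤ_[p])^n ∣ (fwdDiff (1:ℕ))^[n] f 0 := by
    intro n
    have heq : (fwdDiff (1:ℕ))^[n] f 0
        = ∑ ν ∈ Finset.range (n + 1), (n.choose ν : ℤ_[p]) * (-1) ^ (n - ν) * f ν := by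
      rw [fwdDiff_iter_eq_sum_shift]
      refine Finset.sum_congr rfl fun k _ => ?_
      simp only [zsmul_eq_mul, smul_eq_mul, mul_one, zero_add]
      push_cast
      ring
    rw [heq]; exact hf n
  set a : ℕ → ℚ_[p] := fun n => (((fwdDiff (1:ℕ))^[n] f 0 : ℤ_[p]) : ℚ_[p]) with ha_def
  have hnorm_a : ∀ n, ‖a n‖ ≤ ((p:ℝ)⁻¹)^n := by
    intro n
    obtain ⟨c, hc⟩ := hb n
    have h1 : ‖a n‖ = ‖(fwdDiff (1:ℕ))^[n] f 0‖ := rfl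
    rw [h1, hc, norm_mul, norm_pow, PadicInt.norm_p]
    exact mul_le_of_le_one_right (by positivity) (PadicInt.norm_le_one c)
  have hp1 : (1:ℝ) < p := by exact_mod_cast (Fact.out : p.Prime).one_lt
  have ha : Tendsto a atTop (𝓝 0) := by
    rw [tendsto_zero_iff_norm_tendsto_zero]
    refine squeeze_zero (fun n => norm_nonneg _) hnorm_a ?_
    exact tendsto_pow_atTop_nhds_zero_of_lt_one (by positivity) (inv_lt_one_of_one_lt₀ hp1)
  set G : C(ℤ_[p], ℚ_[p]) := PadicInt.mahlerSeries a with hG_def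
  have hG1 : ∀ x : ℤ_[p], ‖G x‖ ≤ 1 := by
    intro x
    rw [hG_def, PadicInt.mahlerSeries_apply ha]
    refine IsUltrametricDist.norm_tsum_le_of_forall_le_of_nonneg zero_le_one (fun n => ?_)
    rw [norm_smul]
    have h1 : ‖mahler n x‖ ≤ 1 := by
      rw [mahler_apply]
      exact PadicInt.norm_le_one _
    have h2 : ‖a n‖ ≤ 1 := by
      rw [ha_def]
      exact PadicInt.norm_le_one _
    calc ‖mahler n x‖ * ‖a n‖ ≤ 1 * 1 :=
          mul_le_mul h1 h2 (norm_nonneg _) zero_le_one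
      _ = 1 := mul_one 1
  set g : ℤ_[p] → ℤ_[p] := fun x => ⟨G x, hG1 x⟩ with hg_def
  have hgc : Continuous g := Continuous.subtype_mk G.continuous hG1
  have hgf : ∀ m : ℕ, g ((m:ℕ) : ℤ_[p]) = f m := by
    intro m
    have key : (g ((m:ℕ) : ℤ_[p]) : ℚ_[p]) = (f m : ℚ_[p]) := by
      show G ((m:ℕ) : ℤ_[p]) = _
      rw [hG_def, PadicInt.mahlerSeries_apply_nat ha (le_refl m)]
      have hfm : f m = ∑ i ∈ Finset.range (m+1), m.choose i • (fwdDiff (1:ℕ))^[i] f 0 := by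
        have := shift_eq_sum_fwdDiff_iter (1:ℕ) f m 0
        simpa using this
      rw [hfm, ha_def]
      push_cast [nsmul_eq_mul]
      exact (map_sum (PadicInt.Coe.ringHom) (fun x => (m.choose x : ℤ_[p]) * (fwdDiff (1:ℕ))^[x] f 0) (Finset.range (m+1))).symm
    exact Subtype.ext key
  refine ⟨g, ⟨hgc, hgf⟩, ?_⟩
  rintro y ⟨hyc, hyf⟩
  refine PadicInt.denseRange_natCast.equalizer hyc hgc (funext fun m => ?_)
  simp only [Function.comp_apply]
  rw [hyf m, hgf m]
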